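/- On P^3, let v be a normalized rank-2 numerical class with first Chern class c_1(v) = -1 and fix k ∈ Z_{>0}. Among all short exact sequences of pairs 0 → (I_Z(l),1) → (E(k),s) → (I_{Z'}(l'),0) → 0 with v(E) = v and Z, Z' of codimension ≥ 2 defining a positive critical value δ = P_{E(k)}(t) - 2P_{I_Z(l)}(t), the minimal critical value is achieved by the sequence 0 → (O_{P^3}(k-1),1) → (E(k),s) → (I_Z(k),0) → 0, i.e., when l = k-1, Z = ∅, l' = k. -/
import Mathlib


open Polynomial

/-- `p < q` in the lexicographic order on `ℚ[t]`. -/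
def polyLt (p q : Polynomial ℚ) : Prop := 0 < (q - p).leadingCoeff

/-- `p ≤ q` in the lexicographic order on `ℚ[t]`. -/
def polyLe (p q : Polynomial ℚ) : Prop := p = q ∨ polyLt p q

/-- The Hilbert polynomial of `O_{P^3}(m)`: `P(t) = (t+m+1)(t+m+2)(t+m+3)/6`. -/
noncomputable def hilbO (m : ℤ) : Polynomial ℚ :=
  Polynomial.C (6⁻¹ : ℚ) * (X + C ((m : ℚ) + 1)) * (X + C ((m : ℚ) + 2))
    * (X + C ((m : ℚ) + 3))

noncomputable def fpoly (m : ℤ) : Polynomial ℚ :=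
  (X + C ((m : ℚ) + 1)) * (X + C ((m : ℚ) + 2)) * (X + C ((m : ℚ) + 3))

lemma hilbO_eq (m : ℤ) : hilbO m = C (6⁻¹ : ℚ) * fpoly m := by
  simp [hilbO, fpoly, mul_assoc]

lemma f_sub (a b : ℤ) : fpoly a - fpoly b =
    C (3 * ((a : ℚ) - b)) * X ^ 2
    + C (3 * (a : ℚ) ^ 2 + 12 * (a : ℚ) - (3 * (b : ℚ) ^ 2 + 12 * (b : ℚ))) * X
    + C ((a : ℚ) ^ 3 + 6 * (a : ℚ) ^ 2 + 11 * (a : ℚ)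
        - ((b : ℚ) ^ 3 + 6 * (b : ℚ) ^ 2 + 11 * (b : ℚ))) := by
  simp only [fpoly, map_add, map_sub, map_mul, map_pow, map_ofNat, map_one]
  ring

lemma lead_aux (c2 c1 c0 : ℚ) (h2 : c2 ≠ 0) (P : Polynomial ℚ) (hP : P.degree ≤ 1) :
    (C c2 * X ^ 2 + C c1 * X + C c0 + P).leadingCoeff = c2 := by
  set D := C c2 * X ^ 2 + C c1 * X + C c0 + P with hD
  have hc : D.coeff 2 = c2 := by
    have hP2 : P.coeff 2 = 0 :=
      coeff_eq_zero_of_degree_lt (lt_of_le_of_lt hP (by norm_num))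
    simp [hD, coeff_add, coeff_C_mul, coeff_X_pow, coeff_C, hP2, coeff_X]
  have hdle : D.degree ≤ 2 := by
    apply le_trans (degree_add_le _ _)
    apply max_le _ (le_trans hP (by norm_num))
    apply le_trans (degree_add_le _ _)
    apply max_le _ (le_trans degree_C_le (by norm_num))
    apply le_trans (degree_add_le _ _)
    apply max_le (le_trans (degree_C_mul_X_pow_le _ _) (by norm_num))
    exact le_trans (degree_C_mul_X_le _) (by norm_num)
  have hdeg : D.degree = 2 := by
    refine le_antisymm hdle ?_
    exact le_degree_of_ne_zero (by rw [hc]; exact h2)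
  have hnd : D.natDegree = 2 := natDegree_eq_of_degree_eq_some hdeg
  rw [leadingCoeff, hnd, hc]

lemma lead_main (a b : ℤ) (hab : a ≠ b) (P : Polynomial ℚ) (hP : P.degree ≤ 1) :
    (hilbO a - hilbO b + P).leadingCoeff = ((a : ℚ) - b) / 2 := by
  have h1 : hilbO a - hilbO b + P =
      C (6⁻¹ * (3 * ((a : ℚ) - b))) * X ^ 2
      + C (6⁻¹ * (3 * (a : ℚ) ^ 2 + 12 * (a : ℚ) - (3 * (b : ℚ) ^ 2 + 12 * (b : ℚ)))) * X
      + C (6⁻¹ * ((a : ℚ) ^ 3 + 6 * (a : ℚ) ^ 2 + 11 * (a : ℚ)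
          - ((b : ℚ) ^ 3 + 6 * (b : ℚ) ^ 2 + 11 * (b : ℚ)))) + P := by
    rw [hilbO_eq, hilbO_eq, ← mul_sub, f_sub]
    simp only [map_add, map_sub, map_mul, map_pow, map_ofNat, map_one]
    ring
  have h2ne : (6⁻¹ * (3 * ((a : ℚ) - b))) ≠ 0 := by
    intro h
    apply sub_ne_zero.mpr (show (a : ℚ) ≠ b by exact_mod_cast hab)
    linarith
  rw [h1, lead_aux _ _ _ h2ne P hP]
  ring

/-- on `P^3`, for a normalized rank-2 class `v` with `c_1(v) = -1` and
`k > 0`, consider all walls given by short exact sequences of pairs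
`0 → (I_Z(l), 1) → (E(k), s) → (I_{Z'}(l'), 0) → 0` with `Z, Z'` of codimension `≥ 2`
(so their Hilbert polynomials `PZ, PZ'` have degree `≤ 1` and nonnegative leading
coefficient), with critical value `δ = P_{E(k)} - 2 P_{I_Z(l)}` where
`P_{I_Z(l)} = P_{O(l)} - PZ`. Here `c_1 = -1` forces `l + l' = 2k - 1`, and the exact
sequence forces `P_{E(k)} = P_{I_Z(l)} + P_{I_{Z'}(l')}`. Among all such walls with
`δ > 0` (lexicographically), the minimal critical value is the one of the sequence
`0 → (O(k-1), 1) → (E(k), s) → (I_Z(k), 0) → 0`, i.e. `l = k - 1`, `Z = ∅`, `l' = k`: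
every such `δ` is at least `P_{E(k)} - 2 P_{O(k-1)}`. -/
theorem minimal_wall_for_c1_neg_one
    (k : ℤ) (hk : 0 < k) (PEk : Polynomial ℚ) :
    ∀ (l l' : ℤ) (PZ PZ' : Polynomial ℚ),
      l + l' = 2 * k - 1 →
      PZ.degree ≤ 1 → PZ'.degree ≤ 1 →
      (PZ = 0 ∨ 0 < PZ.leadingCoeff) → (PZ' = 0 ∨ 0 < PZ'.leadingCoeff) →
      PEk = (hilbO l - PZ) + (hilbO l' - PZ') →
      0 < (PEk - (2 : ℚ) • (hilbO l - PZ)).leadingCoeff →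
      polyLe (PEk - (2 : ℚ) • hilbO (k - 1)) (PEk - (2 : ℚ) • (hilbO l - PZ)) := by
  intro l l' PZ PZ' hll hdZ hdZ' hZ hZ' hPE hpos
  have hdiff : PEk - (2 : ℚ) • (hilbO l - PZ) = hilbO l' - hilbO l + (PZ - PZ') := by
    subst hPE; module
  have hPd : (PZ - PZ').degree ≤ 1 := le_trans (degree_sub_le _ _) (max_le hdZ hdZ')
  have hlt : l < l' := by
    rcases lt_trichotomy l l' with h | h | h
    · exact h
    · omega
    · exfalso
      have heq := lead_main l' l (by omega) (PZ - PZ') hPd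
      rw [hdiff, heq] at hpos
      have hc : (l' : ℚ) < l := by exact_mod_cast h
      linarith
  have hd2 : (PEk - (2 : ℚ) • (hilbO l - PZ)) - (PEk - (2 : ℚ) • hilbO (k - 1))
      = (2 : ℚ) • (hilbO (k - 1) - hilbO l + PZ) := by module
  rcases eq_or_lt_of_le (show l ≤ k - 1 by omega) with hl | hl
  · rcases hZ with h0 | hposZ
    · left
      rw [← hl, h0]
      module
    · right
      unfold polyLt
      rw [hd2, ← hl]
      have : hilbO l - hilbO l + PZ = PZ := by ring
      rw [this, smul_eq_C_mul, leadingCoeff_mul, leadingCoeff_C]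
      linarith
  · right
    unfold polyLt
    rw [hd2, smul_eq_C_mul, leadingCoeff_mul, leadingCoeff_C,
      lead_main (k - 1) l (by omega) PZ hdZ]
    have hc : (l : ℚ) < ((k - 1 : ℤ) : ℚ) := by exact_mod_cast hl
    linarith
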